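/- arXiv:2005.05809 — 7 statements merged into one kernel-verified Lean document; each statement's English description precedes it below -/
import Mathlib

section
/- Let (B,·,∘) be a skew left brace, and define x ·' y := y · x. Then (B,·',∘) is also a skew left brace (the opposite brace). -/
/-- Let `(B, ·, ∘)` be a skew left brace and define `x ·' y := y · x`. Then `(B, ·', ∘)`
is also a skew left brace (the opposite brace): the brace relation holds for `·'`,
namely `x ∘ (y ·' z) = ((x ∘ y) ·' x⁻¹) ·' (x ∘ z)`, where the inverse of `x` in
`(B, ·')` coincides with its inverse `x⁻¹` in `(B, ·)`. -/
theorem opposite_brace {B : Type*} [Group B]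
    (circ : B → B → B) (e : B) (cinv : B → B)
    (hassoc : ∀ x y z : B, circ (circ x y) z = circ x (circ y z))
    (he_left : ∀ x : B, circ e x = x) (he_right : ∀ x : B, circ x e = x)
    (hinv_left : ∀ x : B, circ (cinv x) x = e)
    (hinv_right : ∀ x : B, circ x (cinv x) = e)
    (hbrace : ∀ x y z : B, circ x (y * z) = circ x y * x⁻¹ * circ x z)
    (dot' : B → B → B) (hdot' : ∀ x y : B, dot' x y = y * x) :
    ∀ x y z : B, circ x (dot' y z) = dot' (dot' (circ x y) x⁻¹) (circ x z) := by
  intro x y z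
  simp [hdot', hbrace, mul_assoc]
end

section
/- Let (B,·,∘) be a skew left brace, and define x ∘' y := (x⁻¹ ∘ y⁻¹)⁻¹, where inverses are taken in (B,·). Then (B,·,∘') is a skew left brace, and the map μ(x) = x⁻¹ is an isomorphism of skew left braces from (B,·ᵒᵖ,∘) to (B,·,∘'), where x ·ᵒᵖ y = y · x. -/
/-- Let `(B, ·, ∘)` be a skew left brace and define `x ∘' y := (x⁻¹ ∘ y⁻¹)⁻¹` (inverses in
`(B, ·)`). Then `(B, ·, ∘')` is a skew left brace (its brace relation holds), and the map
`μ(x) = x⁻¹` is an isomorphism of skew left braces from `(B, ·ᵒᵖ, ∘)` to `(B, ·, ∘')`: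
it is a bijection with `μ(x ·ᵒᵖ y) = μ(x) · μ(y)` and `μ(x ∘ y) = μ(x) ∘' μ(y)`. -/
theorem circ_opposite_brace {B : Type*} [Group B]
    (circ : B → B → B) (e : B) (cinv : B → B)
    (hassoc : ∀ x y z : B, circ (circ x y) z = circ x (circ y z))
    (he_left : ∀ x : B, circ e x = x) (he_right : ∀ x : B, circ x e = x)
    (hinv_left : ∀ x : B, circ (cinv x) x = e)
    (hinv_right : ∀ x : B, circ x (cinv x) = e)
    (hbrace : ∀ x y z : B, circ x (y * z) = circ x y * x⁻¹ * circ x z)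
    (circ' : B → B → B) (hcirc' : ∀ x y : B, circ' x y = (circ x⁻¹ y⁻¹)⁻¹)
    (μ : B → B) (hμ : ∀ x : B, μ x = x⁻¹) :
    (∀ x y z : B, circ' x (y * z) = circ' x y * x⁻¹ * circ' x z) ∧
    Function.Bijective μ ∧
    (∀ x y : B, μ (y * x) = μ x * μ y) ∧
    (∀ x y : B, μ (circ x y) = circ' (μ x) (μ y)) := by
  refine ⟨fun x y z => ?_, ?_, fun x y => ?_, fun x y => ?_⟩
  · simp only [hcirc', mul_inv_rev, hbrace, mul_inv_rev, inv_inv]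
    group
  · constructor
    · intro a b h; have := congrArg Inv.inv h; simpa [hμ] using this
    · intro a; exact ⟨a⁻¹, by simp [hμ]⟩
  · simp [hμ, mul_inv_rev]
  · simp [hμ, hcirc']
end

section
/- Let G be a finite group and ψ an abelian fixed-point-free endomorphism of G. Then the map α_ψ : G → Perm(G) defined by α_ψ(σ) = λ(σ)ρ(ψ(σ)) is an injective group homomorphism whose image acts freely on G (i.e., α_ψ(σ)(τ) = τ for some τ implies σ = 1). -/
/-- The left regular representation `λ(g)(x) = gx`. -/
noncomputable def lam {G : Type*} [Group G] (g : G) : Equiv.Perm G := Equiv.mulLeft g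

/-- The right regular representation `ρ(g)(x) = xg⁻¹`. -/
noncomputable def rho {G : Type*} [Group G] (g : G) : Equiv.Perm G := Equiv.mulRight g⁻¹

/-- For an abelian fixed-point-free endomorphism `ψ` of a finite group `G`, the map
`α_ψ(σ) = λ(σ)ρ(ψ(σ))` is an injective homomorphism `G → Perm G` whose image acts
freely on `G`. -/
theorem alpha_psi_injective_hom_free {G : Type*} [Group G] [Finite G]
    (ψ : G →* G)
    (habelian : ∀ σ τ : G, ψ (σ * τ) = ψ (τ * σ))
    (hfpf : ∀ σ : G, ψ σ = σ → σ = 1)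
    (α : G → Equiv.Perm G) (hα : ∀ σ : G, α σ = lam σ * rho (ψ σ)) :
    (∀ σ τ : G, α (σ * τ) = α σ * α τ) ∧
    Function.Injective α ∧
    (∀ σ τ : G, α σ τ = τ → σ = 1) := by
  have hev : ∀ σ x : G, α σ x = σ * x * (ψ σ)⁻¹ := by
    intro σ x
    simp [hα, lam, rho, mul_assoc]
  have hhom : ∀ σ τ : G, α (σ * τ) = α σ * α τ := by
    intro σ τ
    ext x
    simp only [Equiv.Perm.mul_apply, hev, map_mul, mul_inv_rev]
    group
  have hfree : ∀ σ τ : G, α σ τ = τ → σ = 1 := by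
    intro σ τ h
    rw [hev] at h
    have hψ : ψ σ = τ⁻¹ * σ * τ := by
      have h' : τ * ψ σ = σ * τ := by
        have := congrArg (· * ψ σ) h
        simpa [mul_assoc] using this.symm
      rw [mul_assoc]
      exact eq_inv_mul_iff_mul_eq.mpr h'
    have h2 : ψ (ψ σ) = ψ σ := by
      conv_lhs => rw [hψ, mul_assoc, habelian, mul_inv_cancel_right]
    have h3 : ψ σ = 1 := hfpf _ h2
    rw [hψ] at h3
    have : σ * τ = τ := by
      have := congrArg (τ * ·) h3
      simpa [mul_assoc] using this
    exact mul_eq_right.mp this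
  refine ⟨hhom, ?_, hfree⟩
  intro σ τ h
  have h1 : α (σ * τ⁻¹) = 1 := by
    have : α (σ * τ⁻¹) * α τ = α τ := by
      rw [← hhom, inv_mul_cancel_right, h]
    exact mul_eq_right.mp this
  have : α (σ * τ⁻¹) 1 = 1 := by rw [h1]; rfl
  exact mul_inv_eq_one.mp (hfree (σ * τ⁻¹) 1 this)
end

section
/- Let G be a finite group and ψ an abelian endomorphism of G. Then the image N_ψ of α_ψ is G-stable: λ(g) α_ψ(σ) λ(g)⁻¹ ∈ N_ψ for all g, σ ∈ G. More precisely, λ(g) α_ψ(σ) λ(g)⁻¹ = α_ψ(gσg⁻¹). -/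
/-- For an abelian endomorphism `ψ` of a finite group `G`, the image `N_ψ` of
`α_ψ(σ) = λ(σ)ρ(ψ(σ))` is `G`-stable; more precisely
`λ(g) α_ψ(σ) λ(g)⁻¹ = α_ψ(gσg⁻¹)` for all `g, σ ∈ G`. -/
theorem alpha_psi_G_stable {G : Type*} [Group G] [Finite G]
    (ψ : G →* G)
    (habelian : ∀ σ τ : G, ψ (σ * τ) = ψ (τ * σ))
    (α : G → Equiv.Perm G) (hα : ∀ σ : G, α σ = lam σ * rho (ψ σ)) :
    (∀ g σ : G, lam g * α σ * (lam g)⁻¹ = α (g * σ * g⁻¹)) ∧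
    (∀ g σ : G, lam g * α σ * (lam g)⁻¹ ∈ Set.range α) := by
  have key : ∀ g σ : G, lam g * α σ * (lam g)⁻¹ = α (g * σ * g⁻¹) := by
    intro g σ
    have hψ : ψ (g * σ * g⁻¹) = ψ σ := by
      rw [habelian (g * σ) g⁻¹]; group
    rw [hα, hα, hψ]
    ext x
    simp [lam, rho, mul_assoc]
  exact ⟨key, fun g σ => ⟨g * σ * g⁻¹, (key g σ).symm⟩⟩
end

section
/- Let G be a group with presentation ⟨σ, τ | σ^p = τ^q = 1, τστ⁻¹ = σ^g⟩ where p > q are primes, p ≡ 1 (mod q), and g has multiplicative order q modulo p. Define, for 0 ≤ s ≤ p−1 and 2 ≤ t ≤ q−1, the endomorphism ψ_{s,t} of G by ψ_{s,t}(σ) = 1 and ψ_{s,t}(τ) = σ^s τ^t. Then each ψ_{s,t} is an abelian fixed-point-free endomorphism of G. -/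
/-- Let `G = ⟨σ, τ | σ^p = τ^q = 1, τστ⁻¹ = σ^g⟩` be the nonabelian group of order `pq`,
where `p > q` are primes, `p ≡ 1 (mod q)`, and `g` has multiplicative order `q` mod `p`.
For `0 ≤ s ≤ p-1` and `2 ≤ t ≤ q-1`, the endomorphism `ψ_{s,t}` of `G` determined by
`ψ_{s,t}(σ) = 1` and `ψ_{s,t}(τ) = σ^s τ^t` is abelian and fixed-point-free. -/
theorem psi_st_abelian_fpf {G : Type*} [Group G]
    (p q : ℕ) (hp : p.Prime) (hq : q.Prime) (hlt : q < p) (hmod : p % q = 1)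
    (g : ℕ) (hg : orderOf ((g : ZMod p)) = q)
    (σ τ : G)
    (hcard : Nat.card G = p * q)
    (hσ : orderOf σ = p) (hτ : orderOf τ = q)
    (hrel : τ * σ * τ⁻¹ = σ ^ g)
    (hgen : Subgroup.closure ({σ, τ} : Set G) = ⊤)
    (s t : ℕ) (hs : s ≤ p - 1) (ht2 : 2 ≤ t) (htq : t ≤ q - 1)
    (ψ : G →* G) (hψσ : ψ σ = 1) (hψτ : ψ τ = σ ^ s * τ ^ t) :
    (∀ x y : G, ψ (x * y) = ψ (y * x)) ∧ (∀ x : G, ψ x = x → x = 1) := by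
  have hq0 : 0 < q := hq.pos
  have hp0 : 0 < p := hp.pos
  set y : G := σ ^ s * τ ^ t with hy
  -- ψ maps everything into the cyclic subgroup generated by y
  have hmem : ∀ x : G, ψ x ∈ Subgroup.zpowers y := by
    intro x
    have hle : Subgroup.closure ({σ, τ} : Set G) ≤ (Subgroup.zpowers y).comap ψ := by
      rw [Subgroup.closure_le]
      intro z hz
      rcases hz with rfl | hz
      · exact Subgroup.mem_comap.mpr (by rw [hψσ]; exact one_mem _)
      · rcases hz with rfl
        exact Subgroup.mem_comap.mpr (by rw [hψτ]; exact Subgroup.mem_zpowers y)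
    have hx : x ∈ Subgroup.closure ({σ, τ} : Set G) := by rw [hgen]; trivial
    exact Subgroup.mem_comap.mp (hle hx)
  -- abelian part
  have habel : ∀ x z : G, ψ (x * z) = ψ (z * x) := by
    intro a b
    obtain ⟨m, hm⟩ := hmem a
    obtain ⟨n, hn⟩ := hmem b
    rw [map_mul, map_mul, ← hm, ← hn, ← zpow_add, ← zpow_add, add_comm]
  refine ⟨habel, ?_⟩
  -- basic power relations
  have hτq : τ ^ q = 1 := by rw [← hτ]; exact pow_orderOf_eq_one τ
  have hτinv : τ ^ (q - 1) = τ⁻¹ := by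
    apply eq_inv_of_mul_eq_one_left
    rw [← pow_succ, Nat.sub_add_cancel hq0, hτq]
  -- conjugation formula
  have hconj : ∀ n : ℕ, τ ^ n * σ * (τ ^ n)⁻¹ = σ ^ (g ^ n) := by
    intro n
    induction n with
    | zero => simp
    | succ n ih =>
      have h1 : τ ^ (n + 1) * σ * (τ ^ (n + 1))⁻¹
          = τ * (τ ^ n * σ * (τ ^ n)⁻¹) * τ⁻¹ := by
        rw [pow_succ']; group
      rw [h1, ih, ← conj_pow, hrel, ← pow_mul, ← pow_succ']
  -- the subgroup generated by σ is normal
  have hτnorm : τ ∈ Subgroup.normalizer (Subgroup.zpowers σ : Set G) := by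
    rw [Subgroup.mem_normalizer_iff]
    intro h
    constructor
    · rintro ⟨j, hj⟩
      have hj' : σ ^ j = h := hj
      refine ⟨g * j, ?_⟩
      show σ ^ ((g : ℤ) * j) = τ * h * τ⁻¹
      rw [← hj', ← conj_zpow, hrel, ← zpow_natCast, ← zpow_mul]
    · rintro ⟨j, hj⟩
      have hj' : σ ^ j = τ * h * τ⁻¹ := hj
      have h2 : h = τ⁻¹ * σ ^ j * τ := by
        rw [hj']; group
      refine ⟨(g ^ (q - 1) : ℕ) * j, ?_⟩
      show σ ^ (((g ^ (q - 1) : ℕ) : ℤ) * j) = h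
      have h3 : τ⁻¹ * σ ^ j * τ = (τ⁻¹ * σ * τ⁻¹⁻¹) ^ j := by
        rw [conj_zpow, inv_inv]
      have h4 : τ⁻¹ * σ * τ⁻¹⁻¹ = σ ^ (g ^ (q - 1)) := by
        rw [← hτinv]; exact hconj (q - 1)
      rw [h2, h3, h4, ← zpow_natCast, ← zpow_mul]
  have hNnormal : (Subgroup.zpowers σ).Normal := by
    apply Subgroup.normalizer_eq_top_iff.mp
    rw [eq_top_iff, ← hgen, Subgroup.closure_le]
    intro z hz
    rcases hz with rfl | hz
    · exact Subgroup.le_normalizer (Subgroup.mem_zpowers z)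
    · rcases hz with rfl
      exact hτnorm
  -- τ is not a power of σ
  have hτnotmem : τ ∉ Subgroup.zpowers σ := by
    intro hmem'
    have := orderOf_dvd_of_mem_zpowers hmem'
    rw [hτ, hσ] at this
    have := (Nat.prime_dvd_prime_iff_eq hq hp).mp this
    omega
  -- order of y is divisible by q, via the quotient by ⟨σ⟩
  letI := hNnormal
  have hGfin : Finite G := Nat.finite_of_card_ne_zero (by rw [hcard]; positivity)
  set π := QuotientGroup.mk' (Subgroup.zpowers σ) with hπ
  have hcardQ : Nat.card (G ⧸ Subgroup.zpowers σ) = q := by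
    have h1 := Subgroup.card_eq_card_quotient_mul_card_subgroup (Subgroup.zpowers σ)
    rw [hcard, Nat.card_zpowers, hσ, mul_comm p q] at h1
    exact (Nat.eq_of_mul_eq_mul_right hp0 h1.symm)
  have hπτ : orderOf (π τ) = q := by
    have hdvd : orderOf (π τ) ∣ q := by
      rw [← hcardQ]; exact orderOf_dvd_natCard _
    rcases (Nat.Prime.eq_one_or_self_of_dvd hq _ hdvd) with h | h
    · exfalso
      have : π τ = 1 := orderOf_eq_one_iff.mp h
      rw [hπ, QuotientGroup.mk'_apply, QuotientGroup.eq_one_iff] at this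
      exact hτnotmem this
    · exact h
  have hqt : ¬ q ∣ t := by
    intro hdvd
    have := Nat.le_of_dvd (by omega) hdvd
    omega
  have hqy : q ∣ orderOf y := by
    have hπy : π y = (π τ) ^ t := by
      have hπσ : π σ = 1 := by
        rw [hπ, QuotientGroup.mk'_apply, QuotientGroup.eq_one_iff]
        exact Subgroup.mem_zpowers σ
      rw [hy, map_mul, map_pow, map_pow, hπσ, one_pow, one_mul]
    have hπy1 : π y ≠ 1 := by
      rw [hπy]
      intro h1
      exact hqt (hπτ ▸ orderOf_dvd_of_pow_eq_one h1)
    have hdvd : orderOf (π y) ∣ q := by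
      rw [← hcardQ]; exact orderOf_dvd_natCard _
    rcases (Nat.Prime.eq_one_or_self_of_dvd hq _ hdvd) with h | h
    · exact absurd (orderOf_eq_one_iff.mp h) hπy1
    · exact h ▸ orderOf_map_dvd π y
  -- G is not abelian-generated by y: the order of y is exactly q
  have hyq : orderOf y = q := by
    obtain ⟨d, hd⟩ := hqy
    have hdvd : orderOf y ∣ p * q := hcard ▸ orderOf_dvd_natCard y
    have hdp : d ∣ p := by
      have : q * d ∣ q * p := by rw [← hd, mul_comm q p]; exact hdvd
      exact (mul_dvd_mul_iff_left hq0.ne').mp this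
    rcases (Nat.Prime.eq_one_or_self_of_dvd hp _ hdp) with h | h
    · rw [hd, h, mul_one]
    · exfalso
      -- then y generates G, so G is abelian, contradicting the relation
      have hytop : Subgroup.zpowers y = ⊤ := by
        apply Subgroup.eq_top_of_card_eq
        rw [Nat.card_zpowers, hd, h, hcard, mul_comm]
      have hcomm : Commute σ τ := by
        have hσy : σ ∈ Subgroup.zpowers y := hytop ▸ Subgroup.mem_top σ
        have hτy : τ ∈ Subgroup.zpowers y := hytop ▸ Subgroup.mem_top τ
        obtain ⟨i, hi⟩ := hσy
        obtain ⟨j, hj⟩ := hτy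
        rw [← hi, ← hj]
        exact (Commute.refl y).zpow_zpow i j
      have hσg : σ ^ g = σ ^ 1 := by
        rw [pow_one, ← hrel, ← hcomm.eq, mul_assoc, mul_inv_cancel, mul_one]
      have hmodeq : g ≡ 1 [MOD p] := by
        rw [← hσ]; exact (pow_eq_pow_iff_modEq.mp hσg)
      have : (g : ZMod p) = ((1 : ℕ) : ZMod p) :=
        (ZMod.natCast_eq_natCast_iff _ _ _).mpr hmodeq
      rw [this, Nat.cast_one, orderOf_one] at hg
      exact hq.one_lt.ne' hg.symm
  -- fixed-point-free part
  intro x hx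
  obtain ⟨k, hk0⟩ := hmem x
  rw [hx] at hk0
  have hk : y ^ k = x := hk0
  have hψy : ψ y = y ^ t := by
    rw [hy, map_mul, map_pow, map_pow, hψσ, one_pow, one_mul, hψτ]
  have hx2 : y ^ ((t : ℤ) * k) = x := by
    rw [← hx, ← hk, map_zpow, hψy, ← zpow_natCast, ← zpow_mul]
  have hk2 : y ^ ((t : ℤ) * k - k) = 1 := by
    rw [zpow_sub, hx2, hk, mul_inv_cancel]
  have hdvd : (q : ℤ) ∣ k * ((t : ℤ) - 1) := by
    have := orderOf_dvd_iff_zpow_eq_one.mpr hk2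
    rw [hyq] at this
    convert this using 1
    ring
  have hqprime : Prime (q : ℤ) := Nat.prime_iff_prime_int.mp hq
  have hqt1 : ¬ (q : ℤ) ∣ ((t : ℤ) - 1) := by
    intro h
    have h1 : (0 : ℤ) < (t : ℤ) - 1 := by
      have : (2 : ℤ) ≤ t := by exact_mod_cast ht2
      omega
    have := Int.le_of_dvd h1 h
    have hqt' : (t : ℤ) ≤ (q : ℤ) - 1 := by
      have : t ≤ q - 1 := htq
      omega
    omega
  have hqk : (q : ℤ) ∣ k := by
    rcases (hqprime.dvd_mul.mp hdvd) with h | h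
    · exact h
    · exact absurd h hqt1
  obtain ⟨k', rfl⟩ := hqk
  rw [← hk]
  rw [zpow_mul, zpow_natCast, ← hyq, pow_orderOf_eq_one, one_zpow]
end

section
/- Let B be the set of pairs (i,j) with i ∈ ℤ/p and j ∈ ℤ/q, where p > q are primes with p ≡ 1 (mod q), and let g be an integer of multiplicative order q modulo p. Define (i,j)·(k,ℓ) = (i + k g^j, j+ℓ) and (i,j)∘(k,ℓ) = (i+k, j+ℓ). Then (B,·,∘) is a skew left brace whose dot group is nonabelian of order pq and whose circle group is cyclic of order pq. -/
/-- Let `B = ℤ/p × ℤ/q` with `p > q` primes, `p ≡ 1 (mod q)`, and `g` of multiplicative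
order `q` mod `p`. With `(i,j)·(k,ℓ) = (i + k g^j, j+ℓ)` and `(i,j)∘(k,ℓ) = (i+k, j+ℓ)`,
the triple `(B, ·, ∘)` is a skew left brace whose dot group is nonabelian of order `pq`
and whose circle group is cyclic of order `pq`. -/
theorem brace_metacyclic_dot_cyclic_circ
    (p q : ℕ) (hp : p.Prime) (hq : q.Prime) (hlt : q < p) (hmod : p % q = 1)
    (g : ℕ) (hg : orderOf ((g : ZMod p)) = q) :
    letI B := ZMod p × ZMod q
    letI gp : ZMod q → ZMod p := fun j => (g : ZMod p) ^ j.val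
    letI dot : B → B → B := fun x y => (x.1 + y.1 * gp x.2, x.2 + y.2)
    letI circ : B → B → B := fun x y => (x.1 + y.1, x.2 + y.2)
    letI dinv : B → B := fun x => (-x.1 * gp (-x.2), -x.2)
    -- `(B, ·)` is a group
    (∀ a b c : B, dot (dot a b) c = dot a (dot b c)) ∧
    (∀ a : B, dot ((0, 0) : B) a = a) ∧ (∀ a : B, dot a ((0, 0) : B) = a) ∧
    (∀ a : B, dot a (dinv a) = ((0, 0) : B)) ∧
    (∀ a : B, dot (dinv a) a = ((0, 0) : B)) ∧
    -- `(B, ∘)` is a group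
    (∀ a b c : B, circ (circ a b) c = circ a (circ b c)) ∧
    (∀ a : B, circ ((0, 0) : B) a = a) ∧ (∀ a : B, circ a ((0, 0) : B) = a) ∧
    (∀ a : B, circ a (-a.1, -a.2) = ((0, 0) : B)) ∧
    (∀ a : B, circ (-a.1, -a.2) a = ((0, 0) : B)) ∧
    -- the brace relation
    (∀ x y z : B, circ x (dot y z) = dot (dot (circ x y) (dinv x)) (circ x z)) ∧
    -- both groups have order `pq`
    Nat.card B = p * q ∧
    -- the dot group is nonabelian
    (∃ x y : B, dot x y ≠ dot y x) ∧
    -- the circle group is cyclic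
    (∃ x : B, ∀ y : B, ∃ n : ℕ, y = (fun b => circ x b)^[n] ((0, 0) : B)) := by
  haveI : Fact p.Prime := ⟨hp⟩
  haveI : Fact q.Prime := ⟨hq⟩
  haveI : NeZero q := ⟨hq.pos.ne'⟩
  set gp : ZMod q → ZMod p := fun j => (g : ZMod p) ^ j.val with hgpdef
  have hgp : ∀ a b : ZMod q, gp (a + b) = gp a * gp b := by
    intro a b
    show (g : ZMod p) ^ (a + b).val = _
    have key := pow_mod_orderOf (g : ZMod p) (a.val + b.val)
    rw [hg] at key
    rw [ZMod.val_add, key, pow_add]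
  have hgp0 : gp 0 = 1 := by
    show (g : ZMod p) ^ (0 : ZMod q).val = 1
    simp
  have hginv : ∀ a : ZMod q, gp (-a) * gp a = 1 := by
    intro a; rw [← hgp, neg_add_cancel, hgp0]
  refine ⟨?_, ?_, ?_, ?_, ?_, ?_, ?_, ?_, ?_, ?_, ?_, ?_, ?_, ?_⟩
  · intro a b c
    show (_, _) = (_, _)
    rw [Prod.mk.injEq]
    constructor
    · show a.1 + b.1 * gp a.2 + c.1 * gp (a.2 + b.2)
        = a.1 + (b.1 + c.1 * gp b.2) * gp a.2
      rw [hgp]; ring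
    · show a.2 + b.2 + c.2 = a.2 + (b.2 + c.2); ring
  · intro a
    show (0 + a.1 * gp 0, 0 + a.2) = a
    rw [hgp0]; simp
  · intro a
    show (a.1 + 0 * gp a.2, a.2 + 0) = a
    simp
  · intro a
    show (a.1 + -a.1 * gp (-a.2) * gp a.2, a.2 + -a.2) = (0, 0)
    rw [mul_assoc, hginv]; simp
  · intro a
    show (-a.1 * gp (-a.2) + a.1 * gp (-a.2), -a.2 + a.2) = (0, 0)
    simp [neg_mul]
  · intro a b c
    show (a.1 + b.1 + c.1, a.2 + b.2 + c.2) = (a.1 + (b.1 + c.1), a.2 + (b.2 + c.2))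
    rw [add_assoc, add_assoc]
  · intro a; show (0 + a.1, 0 + a.2) = a; simp
  · intro a; show (a.1 + 0, a.2 + 0) = a; simp
  · intro a; show (a.1 + -a.1, a.2 + -a.2) = (0, 0); simp
  · intro a; show (-a.1 + a.1, -a.2 + a.2) = (0, 0); simp
  · intro x y z
    dsimp only
    show (_, _) = (_, _)
    rw [Prod.mk.injEq]
    constructor
    · show x.1 + (y.1 + z.1 * gp y.2)
        = x.1 + y.1 + -x.1 * gp (-x.2) * gp (x.2 + y.2) + (x.1 + z.1) * gp (x.2 + y.2 + -x.2)
      have h2 : x.2 + y.2 + -x.2 = y.2 := by ring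
      rw [h2, hgp, ← mul_assoc, mul_assoc (-x.1), hginv]; ring
    · show x.2 + (y.2 + z.2) = x.2 + y.2 + -x.2 + (x.2 + z.2); ring
  · simp [Nat.card_prod, Nat.card_eq_fintype_card, ZMod.card]
  · refine ⟨(0, 1), (1, 0), fun h => ?_⟩
    have h1 : (0 : ZMod p) + 1 * gp 1 = 1 + 0 * gp 0 := congrArg Prod.fst h
    have : gp 1 = 1 := by simpa using h1
    have hone : (g : ZMod p) ^ (1 : ZMod q).val = 1 := this
    rw [ZMod.val_one, pow_one] at hone
    have := orderOf_eq_one_iff.mpr hone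
    rw [hg] at this
    exact hq.ne_one this
  · refine ⟨(1, 1), fun y => ?_⟩
    show ∃ n : ℕ, y = (fun b : ZMod p × ZMod q => (1 + b.1, 1 + b.2))^[n] ((0, 0) : ZMod p × ZMod q)
    have hiter : ∀ n : ℕ, (fun b : ZMod p × ZMod q => (1 + b.1, 1 + b.2))^[n] ((0, 0) : ZMod p × ZMod q)
        = ((n : ZMod p), (n : ZMod q)) := by
      intro n; induction n with
      | zero => simp
      | succ n ih =>
        rw [Function.iterate_succ_apply', ih]
        show ((1 : ZMod p) + n, (1 : ZMod q) + n) = _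
        push_cast; rw [Prod.mk.injEq]; constructor <;> ring
    have hcop : Nat.Coprime p q := (Nat.coprime_primes hp hq).mpr hlt.ne'
    obtain ⟨n, h1, h2⟩ := Nat.chineseRemainder hcop y.1.val y.2.val
    refine ⟨n, ?_⟩
    rw [hiter]
    have e1 : (n : ZMod p) = (y.1.val : ZMod p) := (ZMod.natCast_eq_natCast_iff _ _ _).mpr h1
    have e2 : (n : ZMod q) = (y.2.val : ZMod q) := (ZMod.natCast_eq_natCast_iff _ _ _).mpr h2
    rw [Prod.ext_iff]
    exact ⟨by rw [e1, ZMod.natCast_val, ZMod.cast_id], by rw [e2, ZMod.natCast_val, ZMod.cast_id]⟩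
end

section
/- Let B be the set of pairs (i,j) with i ∈ ℤ/p and j ∈ ℤ/q, where p > q are primes with p ≡ 1 (mod q), g an integer of multiplicative order q modulo p, and fix t with 2 ≤ t ≤ q−1. Define (i,j)·(k,ℓ) = (i + k g^j, j+ℓ) and (i,j)∘(k,ℓ) = (i + k g^{j(1−t)}, j+ℓ). Then (B,·,∘) is a skew left brace, and both (B,·) and (B,∘) are nonabelian groups of order pq. -/
private lemma gp_hmul' {p q g : ℕ} [NeZero q] (hg : orderOf ((g : ZMod p)) = q)
    (a b : ZMod q) :
    (g : ZMod p) ^ (a + b).val = (g : ZMod p) ^ a.val * (g : ZMod p) ^ b.val := by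
  have h : (a.val + b.val) % q = (a.val + b.val) % orderOf ((g : ZMod p)) := by rw [hg]
  rw [ZMod.val_add, h, pow_mod_orderOf, pow_add]

/-- Let `B = ℤ/p × ℤ/q` with `p > q` primes, `p ≡ 1 (mod q)`, `g` of multiplicative order
`q` mod `p`, and `2 ≤ t ≤ q-1`. With `(i,j)·(k,ℓ) = (i + k g^j, j+ℓ)` and
`(i,j)∘(k,ℓ) = (i + k g^{j(1-t)}, j+ℓ)`, the triple `(B, ·, ∘)` is a skew left brace, and
both `(B, ·)` and `(B, ∘)` are nonabelian groups of order `pq`. -/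
theorem brace_metacyclic_dot_metacyclic_circ
    (p q : ℕ) (hp : p.Prime) (hq : q.Prime) (hlt : q < p) (hmod : p % q = 1)
    (g : ℕ) (hg : orderOf ((g : ZMod p)) = q)
    (t : ℕ) (ht2 : 2 ≤ t) (htq : t ≤ q - 1) :
    letI B := ZMod p × ZMod q
    letI gp : ZMod q → ZMod p := fun j => (g : ZMod p) ^ j.val
    letI dot : B → B → B := fun x y => (x.1 + y.1 * gp x.2, x.2 + y.2)
    letI circ : B → B → B := fun x y => (x.1 + y.1 * gp ((1 - (t : ZMod q)) * x.2), x.2 + y.2)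
    letI dinv : B → B := fun x => (-x.1 * gp (-x.2), -x.2)
    letI cinv : B → B := fun x => (-x.1 * gp ((1 - (t : ZMod q)) * (-x.2)), -x.2)
    -- `(B, ·)` is a group
    (∀ a b c : B, dot (dot a b) c = dot a (dot b c)) ∧
    (∀ a : B, dot ((0, 0) : B) a = a) ∧ (∀ a : B, dot a ((0, 0) : B) = a) ∧
    (∀ a : B, dot a (dinv a) = ((0, 0) : B)) ∧
    (∀ a : B, dot (dinv a) a = ((0, 0) : B)) ∧
    -- `(B, ∘)` is a group
    (∀ a b c : B, circ (circ a b) c = circ a (circ b c)) ∧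
    (∀ a : B, circ ((0, 0) : B) a = a) ∧ (∀ a : B, circ a ((0, 0) : B) = a) ∧
    (∀ a : B, circ a (cinv a) = ((0, 0) : B)) ∧
    (∀ a : B, circ (cinv a) a = ((0, 0) : B)) ∧
    -- the brace relation
    (∀ x y z : B, circ x (dot y z) = dot (dot (circ x y) (dinv x)) (circ x z)) ∧
    -- both groups have order `pq`
    Nat.card B = p * q ∧
    -- the dot group is nonabelian
    (∃ x y : B, dot x y ≠ dot y x) ∧
    -- the circle group is nonabelian
    (∃ x y : B, circ x y ≠ circ y x) := by
  haveI : Fact p.Prime := ⟨hp⟩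
  haveI : Fact q.Prime := ⟨hq⟩
  haveI : Fact (1 < q) := ⟨hq.one_lt⟩
  have hmul : ∀ a b : ZMod q,
      (g : ZMod p) ^ (a + b).val = (g : ZMod p) ^ a.val * (g : ZMod p) ^ b.val :=
    fun a b => gp_hmul' hg a b
  have h0 : (g : ZMod p) ^ (0 : ZMod q).val = 1 := by simp
  have hmulH : ∀ a b : ZMod q,
      (g : ZMod p) ^ ((1 - (t : ZMod q)) * (a + b)).val =
        (g : ZMod p) ^ ((1 - (t : ZMod q)) * a).val *
          (g : ZMod p) ^ ((1 - (t : ZMod q)) * b).val := by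
    intro a b; rw [mul_add, hmul]
  have hgp1 : ∀ m : ZMod q, (g : ZMod p) ^ m.val = 1 → m = 0 := by
    intro m hm
    have hdvd := orderOf_dvd_of_pow_eq_one hm
    rw [hg] at hdvd
    have hlt' : m.val < q := ZMod.val_lt m
    exact (ZMod.val_eq_zero m).mp (Nat.eq_zero_of_dvd_of_lt hdvd hlt')
  dsimp only
  refine ⟨?_, ?_, ?_, ?_, ?_, ?_, ?_, ?_, ?_, ?_, ?_, ?_, ?_, ?_⟩
  · intro a b c
    simp only [Prod.mk.injEq]
    exact ⟨by linear_combination c.1 * hmul a.2 b.2, by ring⟩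
  · intro a; simp
  · intro a; simp
  · intro a
    have h : (g : ZMod p) ^ (-a.2).val * (g : ZMod p) ^ a.2.val = 1 := by
      rw [← hmul]; simpa using h0
    simp only [Prod.mk.injEq]
    exact ⟨by linear_combination -a.1 * h, by ring⟩
  · intro a
    simp only [Prod.mk.injEq]
    exact ⟨by ring, by ring⟩
  · intro a b c
    simp only [Prod.mk.injEq]
    exact ⟨by linear_combination c.1 * hmulH a.2 b.2, by ring⟩
  · intro a; simp
  · intro a; simp
  · intro a
    have h : (g : ZMod p) ^ ((1 - (t : ZMod q)) * (-a.2)).val *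
        (g : ZMod p) ^ ((1 - (t : ZMod q)) * a.2).val = 1 := by
      rw [← hmulH]; simpa using h0
    simp only [Prod.mk.injEq]
    exact ⟨by linear_combination -a.1 * h, by ring⟩
  · intro a
    simp only [Prod.mk.injEq]
    exact ⟨by ring, by ring⟩
  · intro x y z
    have h : (g : ZMod p) ^ (-x.2).val * (g : ZMod p) ^ (x.2 + y.2).val =
        (g : ZMod p) ^ y.2.val := by
      rw [← hmul, neg_add_cancel_left]
    have e : x.2 + y.2 + -x.2 = y.2 := by ring
    simp only [Prod.mk.injEq, e]
    exact ⟨by linear_combination x.1 * h, by ring⟩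
  · simp [Nat.card_prod, Nat.card_zmod]
  · refine ⟨((0 : ZMod p), (1 : ZMod q)), ((1 : ZMod p), (0 : ZMod q)), ?_⟩
    simp only [Prod.mk.injEq, ne_eq, not_and]
    intro h1
    exfalso
    have hgp : (g : ZMod p) ^ (1 : ZMod q).val = 1 := by simpa using h1
    exact one_ne_zero (hgp1 _ hgp)
  · refine ⟨((0 : ZMod p), (1 : ZMod q)), ((1 : ZMod p), (0 : ZMod q)), ?_⟩
    simp only [Prod.mk.injEq, ne_eq, not_and]
    intro h1
    exfalso
    have h1t : (1 - (t : ZMod q)) ≠ 0 := by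
      intro h
      have htq' : t < q := lt_of_le_of_lt htq (Nat.sub_lt hq.pos one_pos)
      have ht1 : (t : ZMod q) = 1 := by linear_combination -h
      have hv := congrArg ZMod.val ht1
      rw [ZMod.val_cast_of_lt htq', ZMod.val_one] at hv
      omega
    have hgp : (g : ZMod p) ^ ((1 - (t : ZMod q)) * 1).val = 1 := by simpa using h1
    exact h1t (by simpa using hgp1 _ hgp)
end
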